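/- For every even integer g ≥ 2 and every odd integer n with n ≥ max(2g−1, g+3), there exists an OF(n,g). -/

import Mathlib

/-- The weight of a word of length `m` over `ℤ_q` (represented as `Fin q`):
the number of nonzero coordinates. -/
def wordWeight {m q : ℕ} (x : Fin m → Fin q) : ℕ :=
  (Finset.univ.filter (fun i => (x i : ℕ) ≠ 0)).card

/-- The set `H(m)` of all words of length `m` and weight `2` over `ℤ_{g+1}`. -/
def weightTwoWords (m g : ℕ) : Finset (Fin m → Fin (g + 1)) :=
  Finset.univ.filter (fun x => wordWeight x = 2)

/-- A partition of `H(m)` (words of length `m`, weight `2` over `ℤ_{g+1}`) into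
`k` subsets, each of cardinality `s`, with pairwise Hamming distance at least
`3` inside each subset. -/
def HasDist3Partition (m g k s : ℕ) : Prop :=
  ∃ P : Fin k → Finset (Fin m → Fin (g + 1)),
    (∀ i j, i ≠ j → Disjoint (P i) (P j)) ∧
    (Finset.univ.biUnion P = weightTwoWords m g) ∧
    (∀ i, (P i).card = s) ∧
    (∀ i, ∀ x ∈ P i, ∀ y ∈ P i, x ≠ y → 3 ≤ hammingDist x y)

/-- An `ODAR(m,g)`: a partition of `H(m)` into `g²` subsets, each of
cardinality `C(m,2)` and with pairwise Hamming distance at least 3. -/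
def IsODAR (m g : ℕ) : Prop :=
  HasDist3Partition m g (g ^ 2) (m.choose 2)

/-- An `OF(m,g)`: a partition of `H(m)` into `g(m-1)` subsets, each of
cardinality `g·m/2` and with pairwise Hamming distance at least 3. -/
def IsOF (m g : ℕ) : Prop :=
  HasDist3Partition m g (g * (m - 1)) (g * m / 2)


open Finset

open scoped Classical

set_option linter.unusedSectionVars false
set_option linter.unusedVariables false


section Koenig
variable {α L R : Type*}

theorem koenig [DecidableEq α] [DecidableEq L] [DecidableEq R]
    (k : ℕ) (E : Finset α) (l : α → L) (r : α → R)
    (hl : ∀ x ∈ E, (E.filter (fun y => l y = l x)).card = k)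
    (hr : ∀ x ∈ E, (E.filter (fun y => r y = r x)).card = k) :
    ∃ φ : α → ℕ, (∀ x ∈ E, φ x < k) ∧
      (∀ x ∈ E, ∀ y ∈ E, x ≠ y → l x = l y → φ x ≠ φ y) ∧
      (∀ x ∈ E, ∀ y ∈ E, x ≠ y → r x = r y → φ x ≠ φ y) := by
  classical
  induction k generalizing E with
  | zero =>
    refine ⟨fun _ => 0, ?_, ?_, ?_⟩ <;> intro x hx <;>
      · exfalso
        have h := hl x hx
        have : x ∈ E.filter (fun y => l y = l x) := by simp [hx]
        rw [Finset.card_eq_zero] at h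
        simp [h] at this
  | succ k ih =>
    -- set up Hall's theorem data
    set LF : Finset L := E.image l with hLF
    have fiber_card : ∀ a ∈ LF, (E.filter (fun y => l y = a)).card = k + 1 := by
      intro a ha
      obtain ⟨x, hx, rfl⟩ := Finset.mem_image.mp ha
      exact hl x hx
    set t : {a // a ∈ LF} → Finset R := fun a => (E.filter (fun y => l y = a.1)).image r with ht
    have hall : ∀ s : Finset {a // a ∈ LF}, s.card ≤ (s.biUnion t).card := by
      intro s
      set s' : Finset L := s.image Subtype.val with hs'
      have hs'card : s'.card = s.card := Finset.card_image_of_injective _ Subtype.val_injective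
      set B : Finset R := s.biUnion t with hB
      set F : Finset α := E.filter (fun x => l x ∈ s') with hF
      have hFcard : F.card = (k+1) * s'.card := by
        have : F = s'.biUnion (fun a => E.filter (fun y => l y = a)) := by
          ext x
          simp only [hF, Finset.mem_filter, Finset.mem_biUnion]
          constructor
          · rintro ⟨hx, hxs⟩; exact ⟨l x, hxs, hx, rfl⟩
          · rintro ⟨a, ha, hx, hlx⟩
            exact ⟨hx, hlx ▸ ha⟩
        rw [this, Finset.card_biUnion]
        · rw [Finset.sum_congr rfl (fun a ha => ?_), Finset.sum_const, smul_eq_mul, mul_comm]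
          have haLF : a ∈ LF := by
            obtain ⟨⟨a', ha'⟩, _, rfl⟩ := Finset.mem_image.mp (hs' ▸ ha); exact ha'
          exact fiber_card a haLF
        · intro a _ b _ hab
          simp only [Finset.disjoint_left, Finset.mem_filter]
          rintro x ⟨_, rfl⟩ ⟨_, h⟩
          exact hab h
      have hsub : F ⊆ E.filter (fun x => r x ∈ B) := by
        intro x hx
        simp only [hF, Finset.mem_filter] at hx
        obtain ⟨a, has, hav⟩ := Finset.mem_image.mp hx.2
        refine Finset.mem_filter.mpr ⟨hx.1, Finset.mem_biUnion.mpr ⟨a, has, ?_⟩⟩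
        simp only [ht, Finset.mem_image]
        exact ⟨x, Finset.mem_filter.mpr ⟨hx.1, hav.symm⟩, rfl⟩
      have hBcard : (E.filter (fun x => r x ∈ B)).card ≤ (k+1) * B.card := by
        have : E.filter (fun x => r x ∈ B) = B.biUnion (fun b => E.filter (fun y => r y = b)) := by
          ext x
          simp only [Finset.mem_filter, Finset.mem_biUnion]
          constructor
          · rintro ⟨hx, hxB⟩; exact ⟨r x, hxB, hx, rfl⟩
          · rintro ⟨b, hb, hx, hrx⟩
            exact ⟨hx, hrx ▸ hb⟩
        rw [this]
        refine le_trans (Finset.card_biUnion_le) ?_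
        rw [mul_comm, ← smul_eq_mul, ← Finset.sum_const]
        refine Finset.sum_le_sum (fun b _ => ?_)
        rcases Finset.eq_empty_or_nonempty (E.filter (fun y => r y = b)) with he | ⟨x, hx⟩
        · simp [he]
        · have hx' := Finset.mem_filter.mp hx
          have h1 := hr x hx'.1
          have h2 : E.filter (fun y => r y = b) = E.filter (fun y => r y = r x) := by
            apply Finset.filter_congr
            intro y _
            rw [hx'.2]
          rw [h2, h1]
      calc s.card = s'.card := hs'card.symm
        _ ≤ B.card := by
            have := hFcard ▸ Finset.card_le_card hsub
            have h2 := le_trans this hBcard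
            exact Nat.le_of_mul_le_mul_left (by linarith [h2]) (Nat.succ_pos k)
    obtain ⟨f, hfinj, hft⟩ :=
      (Finset.all_card_le_biUnion_card_iff_exists_injective t).mp hall
    -- pick representatives
    have pickspec : ∀ a : {a // a ∈ LF}, ∃ x, x ∈ E ∧ l x = a.1 ∧ r x = f a := by
      intro a
      obtain ⟨x, hx, hrx⟩ := Finset.mem_image.mp (hft a)
      have hx' := Finset.mem_filter.mp hx
      exact ⟨x, hx'.1, hx'.2, hrx⟩
    choose pick hpickE hpickl hpickr using pickspec
    set S : Finset α := LF.attach.image pick with hS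
    have hSE : S ⊆ E := by
      intro x hx
      obtain ⟨a, _, rfl⟩ := Finset.mem_image.mp hx
      exact hpickE a
    -- uniqueness in l-fibers
    have hSl : ∀ x ∈ S, ∀ y ∈ S, l x = l y → x = y := by
      intro x hx y hy hxy
      obtain ⟨a, _, rfl⟩ := Finset.mem_image.mp hx
      obtain ⟨b, _, rfl⟩ := Finset.mem_image.mp hy
      have : a = b := Subtype.ext (by rw [← hpickl a, ← hpickl b, hxy])
      rw [this]
    have hSr : ∀ x ∈ S, ∀ y ∈ S, r x = r y → x = y := by
      intro x hx y hy hxy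
      obtain ⟨a, _, rfl⟩ := Finset.mem_image.mp hx
      obtain ⟨b, _, rfl⟩ := Finset.mem_image.mp hy
      have : a = b := hfinj (by rw [← hpickr a, ← hpickr b, hxy])
      rw [this]
    have hcovl : ∀ x ∈ E, ∃ y ∈ S, l y = l x := by
      intro x hx
      have ha : l x ∈ LF := Finset.mem_image_of_mem l hx
      exact ⟨pick ⟨l x, ha⟩, Finset.mem_image_of_mem pick (Finset.mem_attach _ _),
        hpickl ⟨l x, ha⟩⟩
    -- r-value surjectivity
    have hcovr : ∀ x ∈ E, ∃ y ∈ S, r y = r x := by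
      intro x hx
      -- card of RV equals card of LF
      set RV : Finset R := E.image r with hRV
      have hRVcount : ∀ b ∈ RV, (E.filter (fun y => r y = b)).card = k + 1 := by
        intro b hb
        obtain ⟨z, hz, rfl⟩ := Finset.mem_image.mp hb
        exact hr z hz
      have hcardE1 : E.card = (k+1) * LF.card := by
        have : E = LF.biUnion (fun a => E.filter (fun y => l y = a)) := by
          ext z
          simp only [Finset.mem_biUnion, Finset.mem_filter]
          exact ⟨fun hz => ⟨l z, Finset.mem_image_of_mem l hz, hz, rfl⟩, fun ⟨_, _, hz, _⟩ => hz⟩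
        rw [this, Finset.card_biUnion]
        · rw [Finset.sum_congr rfl (fun a ha => fiber_card a ha),
            Finset.sum_const, smul_eq_mul, mul_comm]
        · intro a _ b _ hab
          simp only [Finset.disjoint_left, Finset.mem_filter]
          rintro z ⟨_, rfl⟩ ⟨_, h⟩
          exact hab h
      have hcardE2 : E.card = (k+1) * RV.card := by
        have : E = RV.biUnion (fun b => E.filter (fun y => r y = b)) := by
          ext z
          simp only [Finset.mem_biUnion, Finset.mem_filter]
          exact ⟨fun hz => ⟨r z, Finset.mem_image_of_mem r hz, hz, rfl⟩, fun ⟨_, _, hz, _⟩ => hz⟩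
        rw [this, Finset.card_biUnion]
        · rw [Finset.sum_congr rfl (fun b hb => hRVcount b hb),
            Finset.sum_const, smul_eq_mul, mul_comm]
        · intro a _ b _ hab
          simp only [Finset.disjoint_left, Finset.mem_filter]
          rintro z ⟨_, rfl⟩ ⟨_, h⟩
          exact hab h
      have hLFRV : LF.card = RV.card := by
        have := hcardE1 ▸ hcardE2
        exact Nat.eq_of_mul_eq_mul_left (Nat.succ_pos k) this
      -- f maps into RV, injectively; image has card RV.card, so it is all of RV
      have hfim : (LF.attach.image (fun a => f a)) ⊆ RV := by
        intro b hb
        obtain ⟨a, _, rfl⟩ := Finset.mem_image.mp hb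
        obtain ⟨z, hz, hrz⟩ := Finset.mem_image.mp (hft a)
        exact hrz ▸ Finset.mem_image_of_mem r (Finset.mem_filter.mp hz).1
      have hfimcard : (LF.attach.image (fun a => f a)).card = RV.card := by
        rw [Finset.card_image_of_injective _ hfinj, Finset.card_attach, hLFRV]
      have heq : LF.attach.image (fun a => f a) = RV :=
        Finset.eq_of_subset_of_card_le hfim (le_of_eq hfimcard.symm)
      have hrxRV : r x ∈ RV := Finset.mem_image_of_mem r hx
      rw [← heq] at hrxRV
      obtain ⟨a, _, hfa⟩ := Finset.mem_image.mp hrxRV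
      exact ⟨pick a, Finset.mem_image_of_mem pick (Finset.mem_attach _ _), by rw [hpickr a, hfa]⟩
    -- residual set
    set E' : Finset α := E \ S with hE'
    have fibl' : ∀ x ∈ E', (E'.filter (fun y => l y = l x)).card = k := by
      intro x hx
      have hxE := (Finset.mem_sdiff.mp hx).1
      obtain ⟨y, hyS, hyl⟩ := hcovl x hxE
      have : E'.filter (fun y => l y = l x) = (E.filter (fun y => l y = l x)).erase y := by
        ext z
        simp only [hE', Finset.mem_filter, Finset.mem_sdiff, Finset.mem_erase]
        constructor
        · rintro ⟨⟨hzE, hzS⟩, hzl⟩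
          exact ⟨fun h => hzS (h ▸ hyS), hzE, hzl⟩
        · rintro ⟨hzy, hzE, hzl⟩
          refine ⟨⟨hzE, fun hzS => hzy ?_⟩, hzl⟩
          exact hSl z hzS y hyS (by rw [hzl, hyl])
      rw [this, Finset.card_erase_of_mem (Finset.mem_filter.mpr ⟨hSE hyS, hyl⟩), hl x hxE]
      omega
    have fibr' : ∀ x ∈ E', (E'.filter (fun y => r y = r x)).card = k := by
      intro x hx
      have hxE := (Finset.mem_sdiff.mp hx).1
      obtain ⟨y, hyS, hyl⟩ := hcovr x hxE
      have : E'.filter (fun y => r y = r x) = (E.filter (fun y => r y = r x)).erase y := by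
        ext z
        simp only [hE', Finset.mem_filter, Finset.mem_sdiff, Finset.mem_erase]
        constructor
        · rintro ⟨⟨hzE, hzS⟩, hzl⟩
          exact ⟨fun h => hzS (h ▸ hyS), hzE, hzl⟩
        · rintro ⟨hzy, hzE, hzl⟩
          refine ⟨⟨hzE, fun hzS => hzy ?_⟩, hzl⟩
          exact hSr z hzS y hyS (by rw [hzl, hyl])
      rw [this, Finset.card_erase_of_mem (Finset.mem_filter.mpr ⟨hSE hyS, hyl⟩), hr x hxE]
      omega
    obtain ⟨φ', hφ'lt, hφ'l, hφ'r⟩ := ih E' fibl' fibr'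
    refine ⟨fun x => if x ∈ S then k else φ' x, ?_, ?_, ?_⟩
    · intro x hx
      by_cases hxS : x ∈ S
      · simp [hxS]
      · simp only [hxS, if_false]
        exact lt_trans (hφ'lt x (Finset.mem_sdiff.mpr ⟨hx, hxS⟩)) (Nat.lt_succ_self k)
    · intro x hx y hy hxy hlxy
      by_cases hxS : x ∈ S <;> by_cases hyS : y ∈ S
      · exact absurd (hSl x hxS y hyS hlxy) hxy
      · simp only [hxS, hyS, if_true, if_false]
        exact fun h => absurd h.symm (Nat.ne_of_lt (hφ'lt y (Finset.mem_sdiff.mpr ⟨hy, hyS⟩)))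
      · simp only [hxS, hyS, if_true, if_false]
        exact fun h => (Nat.ne_of_lt (hφ'lt x (Finset.mem_sdiff.mpr ⟨hx, hxS⟩))) h
      · simp only [hxS, hyS, if_false]
        exact hφ'l x (Finset.mem_sdiff.mpr ⟨hx, hxS⟩) y (Finset.mem_sdiff.mpr ⟨hy, hyS⟩) hxy hlxy
    · intro x hx y hy hxy hrxy
      by_cases hxS : x ∈ S <;> by_cases hyS : y ∈ S
      · exact absurd (hSr x hxS y hyS hrxy) hxy
      · simp only [hxS, hyS, if_true, if_false]
        exact fun h => absurd h.symm (Nat.ne_of_lt (hφ'lt y (Finset.mem_sdiff.mpr ⟨hy, hyS⟩)))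
      · simp only [hxS, hyS, if_true, if_false]
        exact fun h => (Nat.ne_of_lt (hφ'lt x (Finset.mem_sdiff.mpr ⟨hx, hxS⟩))) h
      · simp only [hxS, hyS, if_false]
        exact hφ'r x (Finset.mem_sdiff.mpr ⟨hx, hxS⟩) y (Finset.mem_sdiff.mpr ⟨hy, hyS⟩) hxy hrxy

end Koenig


section Constr


variable {M h : ℕ} [NeZero M]

/-- colors -/
abbrev Col (M h : ℕ) := Fin (4*h) × ZMod M

/-- the circulant step length associated to color `c` and index `l`. -/
def dval (c : Col M h) (l : ℕ) : ℕ := (c.2 + (l : ZMod M)).val + 1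

lemma dval_pos (c : Col M h) (l : ℕ) : 1 ≤ dval c l := Nat.le_add_left _ _

lemma dval_le (c : Col M h) (l : ℕ) : dval c l ≤ M := by
  have := ZMod.val_lt (c.2 + (l : ZMod M))
  unfold dval; omega

lemma dval_inj (hhM : h ≤ M) (c : Col M h) {l l' : ℕ} (hl : l < h) (hl' : l' < h)
    (he : dval c l = dval c l') : l = l' := by
  unfold dval at he
  have h1 : c.2 + (l : ZMod M) = c.2 + (l' : ZMod M) := by
    apply ZMod.val_injective M; omega
  have h2 : (l : ZMod M) = (l' : ZMod M) := by
    exact add_left_cancel h1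
  have h3 : ((l : ℕ) : ZMod M).val = ((l' : ℕ) : ZMod M).val := by rw [h2]
  rwa [ZMod.val_cast_of_lt (by omega), ZMod.val_cast_of_lt (by omega)] at h3

/-- color `c` joins parts `i` and `j` -/
def inCl (c : Col M h) (i j : ZMod (2*M+1)) : Prop :=
  ∃ l, l < h ∧ (j = i + ((dval c l : ℕ) : ZMod (2*M+1)) ∨ j = i - ((dval c l : ℕ) : ZMod (2*M+1)))

lemma cast_d_val {d : ℕ} (hd1 : 1 ≤ d) (hdM : d ≤ M) :
    ((d : ZMod (2*M+1))).val = d := ZMod.val_cast_of_lt (by omega)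

lemma cast_d_ne_zero {d : ℕ} (hd1 : 1 ≤ d) (hdM : d ≤ M) :
    (d : ZMod (2*M+1)) ≠ 0 := by
  intro hc
  have := cast_d_val (M := M) hd1 hdM
  rw [hc] at this
  simp [ZMod.val_zero] at this
  omega

lemma inCl_ne {c : Col M h} {i j : ZMod (2*M+1)} (hc : inCl c i j) : j ≠ i := by
  obtain ⟨l, hl, hor⟩ := hc
  have h1 := dval_pos c l
  have h2 := dval_le c l
  rcases hor with he | he <;> rw [he] <;> intro hcon
  · have : ((dval c l : ℕ) : ZMod (2*M+1)) = 0 := by linear_combination hcon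
    exact cast_d_ne_zero h1 h2 this
  · have : ((dval c l : ℕ) : ZMod (2*M+1)) = 0 := by linear_combination -hcon
    exact cast_d_ne_zero h1 h2 this

lemma inCl_symm {c : Col M h} {i j : ZMod (2*M+1)} (hc : inCl c i j) : inCl c j i := by
  obtain ⟨l, hl, hor⟩ := hc
  refine ⟨l, hl, ?_⟩
  rcases hor with he | he
  · right; rw [he]; ring
  · left; rw [he]; ring

/-- the (unordered) step length between distinct parts -/
def sOf (i j : ZMod (2*M+1)) : ℕ := min ((j - i).val) ((i - j).val)

lemma sOf_symm (i j : ZMod (2*M+1)) : sOf i j = sOf j i := min_comm _ _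

lemma val_add_val {i j : ZMod (2*M+1)} (hij : j ≠ i) :
    (j - i).val + (i - j).val = 2*M+1 := by
  have h0 : j - i ≠ 0 := sub_ne_zero_of_ne hij
  have h1 : i - j = -(j - i) := by ring
  rw [h1, ZMod.neg_val]
  simp only [h0, if_false]
  have := ZMod.val_lt (j - i)
  omega

lemma sOf_range {i j : ZMod (2*M+1)} (hij : j ≠ i) : 1 ≤ sOf i j ∧ sOf i j ≤ M := by
  have hs := val_add_val hij
  have h0 : j - i ≠ 0 := sub_ne_zero_of_ne hij
  have h1 : (j - i).val ≠ 0 := fun hc => h0 (by rwa [← ZMod.val_eq_zero])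
  have h2 : (i - j).val ≠ 0 := by
    intro hc
    have : i - j = 0 := by rwa [← ZMod.val_eq_zero]
    exact hij (by linear_combination -this)
  unfold sOf
  omega

lemma eq_add_iff {i j : ZMod (2*M+1)} {d : ℕ} (hd1 : 1 ≤ d) (hdM : d ≤ M) :
    j = i + (d : ZMod (2*M+1)) ↔ (j - i).val = d := by
  constructor
  · intro he
    rw [he]
    have : i + (d : ZMod (2*M+1)) - i = (d : ZMod (2*M+1)) := by ring
    rw [this, cast_d_val hd1 hdM]
  · intro he
    have : ((j - i).val : ZMod (2*M+1)) = j - i := ZMod.natCast_rightInverse _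
    rw [he] at this
    rw [this]; ring

lemma eq_sub_iff {i j : ZMod (2*M+1)} {d : ℕ} (hd1 : 1 ≤ d) (hdM : d ≤ M) :
    j = i - (d : ZMod (2*M+1)) ↔ (i - j).val = d := by
  constructor
  · intro he
    have : i - j = (d : ZMod (2*M+1)) := by rw [he]; ring
    rw [this, cast_d_val hd1 hdM]
  · intro he
    have : ((i - j).val : ZMod (2*M+1)) = i - j := ZMod.natCast_rightInverse _
    rw [he] at this
    have h2 : i - j = (d : ZMod (2*M+1)) := by rw [← this]
    rw [← h2]; ring

lemma inCl_iff_sOf {c : Col M h} {i j : ZMod (2*M+1)} (hij : j ≠ i) :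
    inCl c i j ↔ ∃ l, l < h ∧ dval c l = sOf i j := by
  have hs := val_add_val hij
  have hr := sOf_range hij
  constructor
  · rintro ⟨l, hl, hor⟩
    refine ⟨l, hl, ?_⟩
    have h1 := dval_pos c l
    have h2 := dval_le c l
    have hmin : sOf i j = min ((j - i).val) ((i - j).val) := rfl
    rcases hor with he | he
    · have hv := (eq_add_iff h1 h2).mp he
      omega
    · have hv := (eq_sub_iff h1 h2).mp he
      omega
  · rintro ⟨l, hl, he⟩
    refine ⟨l, hl, ?_⟩
    have h1 := dval_pos c l
    have h2 := dval_le c l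
    have hmin : sOf i j = min ((j - i).val) ((i - j).val) := rfl
    rcases Nat.le_or_le ((j - i).val) ((i - j).val) with hle | hle
    · left
      rw [eq_add_iff h1 h2, he]
      omega
    · right
      rw [eq_sub_iff h1 h2, he]
      omega

end Constr

section Counting

variable {M h : ℕ} [NeZero M]

lemma cast_sum_ne_zero {d d' : ℕ} (hd1 : 1 ≤ d) (hdM : d ≤ M) (hd1' : 1 ≤ d') (hdM' : d' ≤ M) :
    ((d : ZMod (2*M+1))) + (d' : ZMod (2*M+1)) ≠ 0 := by
  intro hc
  have : ((d + d' : ℕ) : ZMod (2*M+1)) = 0 := by push_cast; linear_combination hc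
  rw [ZMod.natCast_eq_zero_iff] at this
  have := Nat.le_of_dvd (by omega) this
  omega

lemma add_ne_sub {i : ZMod (2*M+1)} {d d' : ℕ} (hd1 : 1 ≤ d) (hdM : d ≤ M)
    (hd1' : 1 ≤ d') (hdM' : d' ≤ M) :
    i + (d : ZMod (2*M+1)) ≠ i - (d' : ZMod (2*M+1)) := by
  intro hc
  exact cast_sum_ne_zero hd1 hdM hd1' hdM' (by linear_combination hc)

lemma add_inj {i : ZMod (2*M+1)} {d d' : ℕ} (hdM : d ≤ M) (hdM' : d' ≤ M)
    (hc : i + (d : ZMod (2*M+1)) = i + (d' : ZMod (2*M+1))) : d = d' := by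
  have h1 : (d : ZMod (2*M+1)) = (d' : ZMod (2*M+1)) := by linear_combination hc
  have h2 := congrArg ZMod.val h1
  rwa [ZMod.val_cast_of_lt (by omega), ZMod.val_cast_of_lt (by omega)] at h2

lemma sub_inj {i : ZMod (2*M+1)} {d d' : ℕ} (hdM : d ≤ M) (hdM' : d' ≤ M)
    (hc : i - (d : ZMod (2*M+1)) = i - (d' : ZMod (2*M+1))) : d = d' := by
  refine add_inj (i := -i) hdM hdM' ?_
  linear_combination -hc

/-- the number of neighbours of a part in a color class is `2h`. -/
lemma nbr_card (hhM : h ≤ M) (c : Col M h) (i : ZMod (2*M+1)) :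
    (univ.filter (fun j => inCl c i j)).card = 2*h := by
  classical
  have hset : univ.filter (fun j => inCl c i j) =
      (range h).biUnion (fun l =>
        {i + ((dval c l : ℕ) : ZMod (2*M+1)), i - ((dval c l : ℕ) : ZMod (2*M+1))}) := by
    ext j
    simp only [mem_filter, mem_univ, true_and, mem_biUnion, mem_range, mem_insert, mem_singleton]
    constructor
    · rintro ⟨l, hl, hor⟩; exact ⟨l, hl, hor⟩
    · rintro ⟨l, hl, hor⟩; exact ⟨l, hl, hor⟩
  rw [hset, Finset.card_biUnion]
  · have : ∀ l ∈ range h,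
        ({i + ((dval c l : ℕ) : ZMod (2*M+1)), i - ((dval c l : ℕ) : ZMod (2*M+1))} :
          Finset (ZMod (2*M+1))).card = 2 := by
      intro l _
      rw [Finset.card_insert_of_notMem (by
        simp only [mem_singleton]
        exact add_ne_sub (dval_pos c l) (dval_le c l) (dval_pos c l) (dval_le c l)),
        Finset.card_singleton]
    rw [Finset.sum_congr rfl this, Finset.sum_const, card_range, smul_eq_mul]
    ring
  · intro l hl l' hl' hll'
    simp only [mem_coe, mem_range] at hl hl'
    simp only [Finset.disjoint_left, mem_insert, mem_singleton]
    rintro x (rfl | rfl) (hc | hc)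
    · exact hll' (dval_inj hhM c hl hl' (add_inj (dval_le c l) (dval_le c l') hc))
    · exact absurd hc (add_ne_sub (dval_pos c l) (dval_le c l) (dval_pos c l') (dval_le c l'))
    · exact absurd hc.symm (add_ne_sub (dval_pos c l') (dval_le c l') (dval_pos c l) (dval_le c l))
    · exact hll' (dval_inj hhM c hl hl' (sub_inj (dval_le c l) (dval_le c l') hc))

/-- the `m`-components available for a pair at step-length `s`. -/
lemma mset_card (hhM : h ≤ M) {s : ℕ} (hs1 : 1 ≤ s) (hsM : s ≤ M) :
    (univ.filter (fun m : ZMod M => ∃ l, l < h ∧ (m + (l : ZMod M)).val + 1 = s)).card = h := by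
  classical
  have hset : univ.filter (fun m : ZMod M => ∃ l, l < h ∧ (m + (l : ZMod M)).val + 1 = s) =
      (range h).image (fun l : ℕ => ((s - 1 : ℕ) : ZMod M) - (l : ZMod M)) := by
    ext m
    simp only [mem_filter, mem_univ, true_and, mem_image, mem_range]
    constructor
    · rintro ⟨l, hl, he⟩
      refine ⟨l, hl, ?_⟩
      have : m + (l : ZMod M) = ((s - 1 : ℕ) : ZMod M) := by
        have h2 : ((m + (l : ZMod M)).val : ZMod M) = m + (l : ZMod M) :=
          ZMod.natCast_rightInverse _
        rw [← h2]
        congr 1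
        omega
      linear_combination -this
    · rintro ⟨l, hl, he⟩
      refine ⟨l, hl, ?_⟩
      have h3 : m + (l : ZMod M) = ((s - 1 : ℕ) : ZMod M) := by rw [← he]; ring
      rw [h3, ZMod.val_cast_of_lt (by omega)]
      omega
  rw [hset, Finset.card_image_of_injOn, card_range]
  intro l hl l' hl' he
  simp only [mem_coe, mem_range] at hl hl'
  have h1 : (l : ZMod M) = (l' : ZMod M) := by linear_combination -he
  have h2 := congrArg ZMod.val h1
  rwa [ZMod.val_cast_of_lt (by omega), ZMod.val_cast_of_lt (by omega)] at h2

/-- counting colors joining a fixed pair, refined by a predicate on the `Fin (4h)` component. -/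
lemma colcount (hhM : h ≤ M) {i j : ZMod (2*M+1)} (hij : j ≠ i) (p : Fin (4*h) → Prop) :
    (univ.filter (fun c : Col M h => inCl c i j ∧ p c.1)).card
      = (univ.filter p).card * h := by
  classical
  have hr := sOf_range hij
  have hset : univ.filter (fun c : Col M h => inCl c i j ∧ p c.1) =
      (univ.filter p) ×ˢ
        (univ.filter (fun m : ZMod M => ∃ l, l < h ∧ (m + (l : ZMod M)).val + 1 = sOf i j)) := by
    ext c
    simp only [mem_filter, mem_univ, true_and, mem_product]
    rw [inCl_iff_sOf hij]
    unfold dval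
    tauto
  rw [hset, Finset.card_product, mset_card hhM hr.1 hr.2]

lemma colorsPair_card (hhM : h ≤ M) {i j : ZMod (2*M+1)} (hij : j ≠ i) :
    (univ.filter (fun c : Col M h => inCl c i j)).card = 4*h*h := by
  classical
  have := colcount (M := M) hhM hij (fun _ => True)
  simp only [and_true, filter_true] at this
  rw [this, Finset.card_univ, Fintype.card_fin]

lemma kgroup_card (hhM : h ≤ M) {i j : ZMod (2*M+1)} (hij : j ≠ i) (q : ℕ) (hq : q < 2*h) :
    (univ.filter (fun c : Col M h => inCl c i j ∧ c.1.val / 2 = q)).card = 2*h := by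
  classical
  have hset : (univ.filter (fun k : Fin (4*h) => k.val / 2 = q)) =
      {⟨2*q, by omega⟩, ⟨2*q+1, by omega⟩} := by
    ext k
    simp only [mem_filter, mem_univ, true_and, mem_insert, mem_singleton]
    constructor
    · intro hk
      rcases Nat.lt_or_ge k.val (2*q+1) with hlt | hge
      · left; apply Fin.ext; show k.val = 2*q; omega
      · right; apply Fin.ext; show k.val = 2*q+1; omega
    · rintro (rfl | rfl) <;> · show _ / 2 = q; simp only [Fin.val_mk]; omega
  have hne : (⟨2*q, by omega⟩ : Fin (4*h)) ∉ ({⟨2*q+1, by omega⟩} : Finset (Fin (4*h))) := by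
    simp only [mem_singleton]
    intro hc
    have : 2*q = 2*q+1 := congrArg Fin.val hc
    omega
  have h2 : (univ.filter (fun k : Fin (4*h) => k.val / 2 = q)).card = 2 := by
    rw [hset, Finset.card_insert_of_notMem hne, Finset.card_singleton]
  have h3 : (univ.filter (fun c : Col M h => inCl c i j ∧ c.1.val / 2 = q)).card
      = (univ.filter (fun k : Fin (4*h) => k.val / 2 = q)).card * h := by
    have hx := colcount (M := M) hhM hij (fun k : Fin (4*h) => k.val / 2 = q)
    convert hx using 2
    · ext x; simp only [Finset.mem_filter]
    · congr 1
      ext x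
      simp only [Finset.mem_filter]
  rw [h3, h2]

lemma all_eq_of_sum {k m : ℕ} (f : ℕ → ℕ) (hle : ∀ b ∈ range k, f b ≤ m)
    (hsum : ∑ b ∈ range k, f b = k * m) : ∀ b ∈ range k, f b = m := by
  by_contra hc
  push_neg at hc
  obtain ⟨b0, hb0, hne⟩ := hc
  have hlt : f b0 < m := lt_of_le_of_ne (hle b0 hb0) hne
  have : ∑ b ∈ range k, f b < ∑ _b ∈ range k, m :=
    Finset.sum_lt_sum hle ⟨b0, hb0, hlt⟩
  rw [hsum, Finset.sum_const, card_range, smul_eq_mul] at this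
  omega

end Counting

section Recursion

variable {M h : ℕ} [NeZero M]

/-- the invariants of the partial assignment after processing parts `0,…,t-1`. -/
def Good (t : ℕ) (A : ZMod (2*M+1) → Col M h → ZMod (2*M+1) → ℕ) : Prop :=
  (∀ j : ZMod (2*M+1), j.val < t → ∀ c j', inCl c j j' → A j c j' < 2*h) ∧
  (∀ j : ZMod (2*M+1), j.val < t → ∀ c j' j'', inCl c j j' → inCl c j j'' →
    A j c j' = A j c j'' → j' = j'') ∧
  (∀ j : ZMod (2*M+1), j.val < t → ∀ j', j' ≠ j → ∀ b, b < 2*h →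
    (univ.filter (fun c : Col M h => inCl c j j' ∧ A j c j' = b)).card = 2*h) ∧
  (∀ j j' : ZMod (2*M+1), j.val < t → j'.val < j.val → ∀ c c', inCl c j j' → inCl c' j j' →
    A j c j' = A j c' j' → A j' c j = A j' c' j → c = c')

lemma val_eq_imp_eq {j i : ZMod (2*M+1)} (hv : j.val = i.val) : j = i := by
  have h1 : ((j.val : ℕ) : ZMod (2*M+1)) = j := ZMod.natCast_rightInverse j
  have h2 : ((i.val : ℕ) : ZMod (2*M+1)) = i := ZMod.natCast_rightInverse i
  rw [← h1, ← h2, hv]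

lemma step_lemma (hh1 : 1 ≤ h) (hhM : h ≤ M) (t : ℕ) (ht : t < 2*M+1)
    (A : ZMod (2*M+1) → Col M h → ZMod (2*M+1) → ℕ) (hA : Good t A) :
    ∃ A', Good (M := M) (h := h) (t+1) A' := by
  classical
  obtain ⟨I0, I1, I2, I3⟩ := hA
  set i : ZMod (2*M+1) := (t : ZMod (2*M+1)) with hidef
  have hival : i.val = t := ZMod.val_cast_of_lt ht
  set E : Finset (Col M h × ZMod (2*M+1)) :=
    univ.filter (fun x => inCl x.1 i x.2) with hE
  set rmap : Col M h × ZMod (2*M+1) → ZMod (2*M+1) × ℕ :=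
    fun x => (x.2, if x.2.val < t then A x.2 x.1 i else x.1.1.val / 2) with hrmap
  -- left fibers
  have hl : ∀ x ∈ E, (E.filter (fun y => y.1 = x.1)).card = 2*h := by
    intro x hx
    have hset : E.filter (fun y => y.1 = x.1) =
        (univ.filter (fun j => inCl x.1 i j)).image (fun j => (x.1, j)) := by
      ext y
      simp only [hE, mem_filter, mem_univ, true_and, mem_image]
      constructor
      · rintro ⟨hy, hy1⟩
        refine ⟨y.2, ?_, ?_⟩
        · rw [← hy1]; exact hy
        · rw [← hy1]
      · rintro ⟨j, hj, rfl⟩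
        exact ⟨hj, rfl⟩
    rw [hset, Finset.card_image_of_injective _ (fun a b hab => (Prod.mk.injEq _ _ _ _).mp hab |>.2),
      nbr_card hhM]
  -- right fibers
  have hr : ∀ x ∈ E, (E.filter (fun y => rmap y = rmap x)).card = 2*h := by
    intro x hx
    simp only [hE, mem_filter, mem_univ, true_and] at hx
    have hxne : x.2 ≠ i := inCl_ne hx
    have hset : E.filter (fun y => rmap y = rmap x) =
        (univ.filter (fun c : Col M h => inCl c i x.2 ∧
          (if x.2.val < t then A x.2 c i else c.1.val / 2) =
          (if x.2.val < t then A x.2 x.1 i else x.1.1.val / 2))).image (fun c => (c, x.2)) := by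
      ext y
      simp only [hE, hrmap, mem_filter, mem_univ, true_and, mem_image, Prod.mk.injEq]
      constructor
      · rintro ⟨hy, hy2, hyb⟩
        refine ⟨y.1, ⟨?_, ?_⟩, ?_⟩
        · rw [← hy2]; exact hy
        · rw [← hy2] at hyb ⊢; exact hyb
        · rw [← hy2]
      · rintro ⟨c, ⟨hc1, hc2⟩, rfl⟩
        exact ⟨hc1, rfl, hc2⟩
    rw [hset, Finset.card_image_of_injective _ (fun a b hab => (Prod.mk.injEq _ _ _ _).mp hab |>.1)]
    by_cases hj : x.2.val < t
    · simp only [hj, if_true]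
      have hne' : i ≠ x.2 := fun hc => hxne hc.symm
      have hb : A x.2 x.1 i < 2*h := I0 x.2 hj x.1 i (inCl_symm hx)
      have h2 := I2 x.2 hj i hne' (A x.2 x.1 i) hb
      have hseteq : (univ.filter (fun c : Col M h => inCl c i x.2 ∧ A x.2 c i = A x.2 x.1 i)) =
          (univ.filter (fun c : Col M h => inCl c x.2 i ∧ A x.2 c i = A x.2 x.1 i)) := by
        ext c
        simp only [mem_filter, mem_univ, true_and]
        exact ⟨fun ⟨u, v⟩ => ⟨inCl_symm u, v⟩, fun ⟨u, v⟩ => ⟨inCl_symm u, v⟩⟩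
      rw [hseteq, h2]
    · simp only [hj, if_false]
      exact kgroup_card hhM hxne (x.1.1.val / 2) (by
        have := x.1.1.isLt
        omega)
  obtain ⟨φ, hφlt, hφl, hφr⟩ := koenig (2*h) E Prod.fst rmap hl hr
  set A' : ZMod (2*M+1) → Col M h → ZMod (2*M+1) → ℕ :=
    fun j c j' => if j = i then φ (c, j') else A j c j' with hA'
  have hrow : ∀ j : ZMod (2*M+1), j.val < t → ∀ c j', A' j c j' = A j c j' := by
    intro j hj c j'
    have : j ≠ i := fun hc => by rw [hc, hival] at hj; omega
    simp only [hA', this, if_false]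
  have hrowi : ∀ c j', A' i c j' = φ (c, j') := by
    intro c j'
    simp only [hA', if_true]
  have hmemE : ∀ c (j' : ZMod (2*M+1)), inCl c i j' → (c, j') ∈ E := by
    intro c j' hc
    simp only [hE, mem_filter, mem_univ, true_and]
    exact hc
  have hsplit : ∀ j : ZMod (2*M+1), j.val < t + 1 → j.val < t ∨ j = i := by
    intro j hj
    rcases Nat.lt_or_ge j.val t with hlt | hge
    · exact Or.inl hlt
    · right; exact val_eq_imp_eq (by omega)
  refine ⟨A', ?_, ?_, ?_, ?_⟩
  · -- I0
    intro j hj c j' hc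
    rcases hsplit j hj with hlt | rfl
    · rw [hrow j hlt]; exact I0 j hlt c j' hc
    · rw [hrowi]; exact hφlt _ (hmemE c j' hc)
  · -- I1
    intro j hj c j' j'' hc hc' he
    rcases hsplit j hj with hlt | rfl
    · rw [hrow j hlt, hrow j hlt] at he; exact I1 j hlt c j' j'' hc hc' he
    · rw [hrowi, hrowi] at he
      by_contra hne
      exact hφl (c, j') (hmemE c j' hc) (c, j'') (hmemE c j'' hc')
        (fun hcon => hne ((Prod.mk.injEq _ _ _ _).mp hcon).2) rfl he
  · -- I2
    intro j hj j' hne b hb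
    rcases hsplit j hj with hlt | rfl
    · have hseteq : (univ.filter (fun c : Col M h => inCl c j j' ∧ A' j c j' = b)) =
          (univ.filter (fun c : Col M h => inCl c j j' ∧ A j c j' = b)) := by
        ext c
        simp only [mem_filter, mem_univ, true_and, hrow j hlt]
      rw [hseteq]
      exact I2 j hlt j' hne b hb
    · -- the new row
      have hne' : j' ≠ i := hne
      have hTcard : (univ.filter (fun c : Col M h => inCl c i j')).card = 4*h*h := by
        have : ∀ c : Col M h, inCl c i j' → j' ≠ i := fun c hc => inCl_ne hc
        exact colorsPair_card hhM hne'
      set T : Finset (Col M h) := univ.filter (fun c : Col M h => inCl c i j') with hT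
      set Bv : Col M h → ℕ := fun c => if j'.val < t then A j' c i else c.1.val / 2 with hBv
      -- the fiberwise sum
      have hmap : ∀ c ∈ T, A' i c j' ∈ range (2*h) := by
        intro c hc
        simp only [hT, mem_filter, mem_univ, true_and] at hc
        rw [mem_range, hrowi]
        exact hφlt _ (hmemE c j' hc)
      have hsum : T.card = ∑ b ∈ range (2*h), (T.filter (fun c => A' i c j' = b)).card :=
        Finset.card_eq_sum_card_fiberwise hmap
      have hle : ∀ b ∈ range (2*h), (T.filter (fun c => A' i c j' = b)).card ≤ 2*h := by
        intro b _
        have hinj : Set.InjOn Bv (T.filter (fun c => A' i c j' = b)) := by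
          intro c hc c' hc' hbv
          simp only [coe_filter, Set.mem_setOf_eq, hT, mem_filter, mem_univ, true_and] at hc hc'
          by_contra hcc
          have hx := hmemE c j' hc.1
          have hy := hmemE c' j' hc'.1
          have hrne : rmap (c, j') = rmap (c', j') := by
            simp only [hrmap]
            rw [hBv] at hbv
            simp only [hbv]
          have := hφr (c, j') hx (c', j') hy
            (fun hcon => hcc ((Prod.mk.injEq _ _ _ _).mp hcon).1) hrne
          rw [← hrowi c j', ← hrowi c' j'] at this
          rw [hc.2, hc'.2] at this
          exact this rfl
        have hmapsto : ∀ c ∈ T.filter (fun c => A' i c j' = b), Bv c ∈ range (2*h) := by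
          intro c hc
          simp only [mem_filter, hT, mem_univ, true_and] at hc
          rw [mem_range, hBv]
          by_cases hj' : j'.val < t
          · simp only [hj', if_true]
            exact I0 j' hj' c i (inCl_symm hc.1)
          · simp only [hj', if_false]
            have := c.1.isLt
            omega
        calc (T.filter (fun c => A' i c j' = b)).card ≤ (range (2*h)).card :=
              Finset.card_le_card_of_injOn Bv hmapsto hinj
          _ = 2*h := card_range _
      have hall := all_eq_of_sum (fun b => (T.filter (fun c => A' i c j' = b)).card) hle
        (by
          beta_reduce
          rw [← hsum]
          rw [hTcard]
          ring)
      have hres : (T.filter (fun c => A' i c j' = b)).card = 2*h := hall b (mem_range.mpr hb)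
      have hseteq : (univ.filter (fun c : Col M h => inCl c i j' ∧ A' i c j' = b)) =
          T.filter (fun c => A' i c j' = b) := by
        ext c
        simp only [hT, mem_filter, mem_univ, true_and, and_assoc]
      rw [hseteq]
      exact hres
  · -- I3
    intro j j' hj hj' c c' hc hc' he he'
    rcases hsplit j hj with hlt | rfl
    · rw [hrow j hlt, hrow j hlt] at he
      rw [hrow j' (by omega), hrow j' (by omega)] at he'
      exact I3 j j' hlt hj' c c' hc hc' he he'
    · rw [hrowi, hrowi] at he
      have hj'lt : j'.val < t := by rw [hival] at hj'; exact hj'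
      rw [hrow j' hj'lt, hrow j' hj'lt] at he'
      by_contra hcc
      have hrne : rmap (c, j') = rmap (c', j') := by
        simp only [hrmap, hj'lt, if_true, he']
      exact hφr (c, j') (hmemE c j' hc) (c', j') (hmemE c' j' hc')
        (fun hcon => hcc ((Prod.mk.injEq _ _ _ _).mp hcon).1) hrne he

lemma build (hh1 : 1 ≤ h) (hhM : h ≤ M) :
    ∀ t, t ≤ 2*M+1 → ∃ A, Good (M := M) (h := h) t A := by
  intro t
  induction t with
  | zero =>
    intro _
    exact ⟨fun _ _ _ => 0, fun j hj => absurd hj (by omega), fun j hj => absurd hj (by omega),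
      fun j hj => absurd hj (by omega), fun j j' hj => absurd hj (by omega)⟩
  | succ t iht =>
    intro hle
    obtain ⟨A, hA⟩ := iht (by omega)
    exact step_lemma hh1 hhM t (by omega) A hA

/-- the final assignment with all invariants, in symmetric form. -/
lemma exists_assignment (hh1 : 1 ≤ h) (hhM : h ≤ M) :
    ∃ A : ZMod (2*M+1) → Col M h → ZMod (2*M+1) → ℕ,
      (∀ j c j', inCl c j j' → A j c j' < 2*h) ∧
      (∀ j c j' j'', inCl c j j' → inCl c j j'' → A j c j' = A j c j'' → j' = j'') ∧
      (∀ j j' : ZMod (2*M+1), j ≠ j' → ∀ c c', inCl c j j' → inCl c' j j' →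
        A j c j' = A j c' j' → A j' c j = A j' c' j → c = c') := by
  obtain ⟨A, I0, I1, _, I3⟩ := build (M := M) (h := h) hh1 hhM (2*M+1) le_rfl
  refine ⟨A, fun j => I0 j (ZMod.val_lt j), fun j => I1 j (ZMod.val_lt j), ?_⟩
  intro j j' hne c c' hc hc' he he'
  rcases Nat.lt_or_ge j'.val j.val with hlt | hge
  · exact I3 j j' (ZMod.val_lt j) hlt c c' hc hc' he he'
  · have hlt : j.val < j'.val := by
      rcases Nat.lt_or_ge j.val j'.val with h1 | h1
      · exact h1
      · exact absurd (val_eq_imp_eq (by omega)) hne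
    exact I3 j' j (ZMod.val_lt j') hlt c c' (inCl_symm hc) (inCl_symm hc') he' he

end Recursion

section Assemble

variable {M h : ℕ} [NeZero M]

def iota (M : ℕ) (x : Fin (2*M+1)) : ZMod (2*M+1) := ((x.val : ℕ) : ZMod (2*M+1))

def kap (M : ℕ) (z : ZMod (2*M+1)) : Fin (2*M+1) := ⟨z.val, ZMod.val_lt z⟩

lemma iota_kap (z : ZMod (2*M+1)) : iota M (kap M z) = z := ZMod.natCast_rightInverse z

lemma kap_iota (x : Fin (2*M+1)) : kap M (iota M x) = x := by
  apply Fin.ext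
  show (iota M x).val = x.val
  exact ZMod.val_cast_of_lt x.isLt

lemma iota_inj {x y : Fin (2*M+1)} (hxy : iota M x = iota M y) : x = y := by
  have := congrArg (kap M) hxy
  rwa [kap_iota, kap_iota] at this

lemma kap_inj {z z' : ZMod (2*M+1)} (hzz : kap M z = kap M z') : z = z' := by
  have := congrArg (iota M) hzz
  rwa [iota_kap, iota_kap] at this

lemma iota_eq_iff {x : Fin (2*M+1)} {z : ZMod (2*M+1)} : iota M x = z ↔ x = kap M z := by
  constructor
  · intro hx; rw [← hx, kap_iota]
  · intro hx; rw [hx, iota_kap]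

def embed (h : ℕ) (a : ℕ) : Fin (2*h+1) := ⟨min a (2*h), by omega⟩

lemma embed_val {a : ℕ} (ha : a ≤ 2*h) : ((embed h a : Fin (2*h+1)) : ℕ) = a := by
  show min a (2*h) = a
  omega

lemma embed_pos_val (hh1 : 1 ≤ h) (a : ℕ) : ((embed h (a+1) : Fin (2*h+1)) : ℕ) ≠ 0 := by
  show min (a+1) (2*h) ≠ 0
  omega

variable (A : ZMod (2*M+1) → Col M h → ZMod (2*M+1) → ℕ)

/-- the word associated to a color and an (oriented) pair of parts -/
def word (c : Col M h) (p : ZMod (2*M+1) × ZMod (2*M+1)) : Fin (2*M+1) → Fin (2*h+1) :=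
  fun x => if iota M x = p.1 then embed h (A p.1 c p.2 + 1)
    else if iota M x = p.2 then embed h (A p.2 c p.1 + 1) else ⟨0, by omega⟩

noncomputable def pairsOf (c : Col M h) : Finset (ZMod (2*M+1) × ZMod (2*M+1)) :=
  univ.filter (fun p => inCl c p.1 p.2 ∧ (p.2 - p.1).val ≤ M)

noncomputable def classOf (c : Col M h) : Finset (Fin (2*M+1) → Fin (2*h+1)) :=
  (pairsOf c).image (fun p => word A c p)

lemma word_at_fst {c : Col M h} {p : ZMod (2*M+1) × ZMod (2*M+1)} :
    word A c p (kap M p.1) = embed h (A p.1 c p.2 + 1) := by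
  unfold word
  rw [if_pos (iota_kap p.1)]

lemma word_at_snd {c : Col M h} {p : ZMod (2*M+1) × ZMod (2*M+1)} (hne : p.2 ≠ p.1) :
    word A c p (kap M p.2) = embed h (A p.2 c p.1 + 1) := by
  unfold word
  rw [if_neg (by rw [iota_kap]; exact hne), if_pos (iota_kap p.2)]

lemma word_at_other {c : Col M h} {p : ZMod (2*M+1) × ZMod (2*M+1)} {x : Fin (2*M+1)}
    (h1 : iota M x ≠ p.1) (h2 : iota M x ≠ p.2) : word A c p x = ⟨0, by omega⟩ := by
  unfold word
  rw [if_neg h1, if_neg h2]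

lemma word_ne_zero_iff (hh1 : 1 ≤ h) {c : Col M h} {p : ZMod (2*M+1) × ZMod (2*M+1)}
    {x : Fin (2*M+1)} :
    ((word A c p x : ℕ) ≠ 0) ↔ (iota M x = p.1 ∨ iota M x = p.2) := by
  constructor
  · intro hx
    by_contra hc
    push_neg at hc
    rw [word_at_other A hc.1 hc.2] at hx
    exact hx rfl
  · rintro (hx | hx)
    · unfold word
      rw [if_pos hx]
      exact embed_pos_val hh1 _
    · by_cases hx1 : iota M x = p.1
      · unfold word
        rw [if_pos hx1]
        exact embed_pos_val hh1 _
      · unfold word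
        rw [if_neg hx1, if_pos hx]
        exact embed_pos_val hh1 _

lemma word_weight (hh1 : 1 ≤ h) {c : Col M h} {p : ZMod (2*M+1) × ZMod (2*M+1)}
    (hp : inCl c p.1 p.2) : wordWeight (word A c p) = 2 := by
  classical
  have hne : p.2 ≠ p.1 := inCl_ne hp
  have hset : (univ.filter (fun x => ((word A c p x : ℕ) ≠ 0))) =
      {kap M p.1, kap M p.2} := by
    ext x
    simp only [mem_filter, mem_univ, true_and, mem_insert, mem_singleton]
    rw [word_ne_zero_iff A hh1, iota_eq_iff, iota_eq_iff]
  unfold wordWeight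
  rw [hset, Finset.card_insert_of_notMem (by
    simp only [mem_singleton]
    intro hcon
    exact hne (kap_inj hcon).symm), Finset.card_singleton]

lemma pairsOf_card (hh1 : 1 ≤ h) (hhM : h ≤ M) (c : Col M h) :
    (pairsOf (M := M) (h := h) c).card = h * (2*M+1) := by
  classical
  have hset : pairsOf (M := M) (h := h) c =
      ((range h) ×ˢ (univ : Finset (ZMod (2*M+1)))).image
        (fun q => (q.2, q.2 + ((dval c q.1 : ℕ) : ZMod (2*M+1)))) := by
    ext p
    simp only [pairsOf, mem_filter, mem_univ, true_and, mem_image, mem_product]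
    constructor
    · rintro ⟨⟨l, hl, hor⟩, hval⟩
      have h1 := dval_pos c l
      have h2 := dval_le c l
      rcases hor with he | he
      · exact ⟨(l, p.1), ⟨mem_range.mpr hl, trivial⟩, by
          show (p.1, p.1 + ((dval c l : ℕ) : ZMod (2*M+1))) = p
          rw [← he]⟩
      · exfalso
        have hv := (eq_sub_iff h1 h2).mp he
        have hne : p.2 ≠ p.1 := by
          intro hcon
          rw [hcon] at he
          have : ((dval c l : ℕ) : ZMod (2*M+1)) = 0 := by linear_combination he
          exact cast_d_ne_zero h1 h2 this
        have hs := val_add_val hne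
        omega
    · rintro ⟨⟨l, i⟩, ⟨hl, _⟩, rfl⟩
      have h1 := dval_pos c l
      have h2 := dval_le c l
      constructor
      · exact ⟨l, mem_range.mp hl, Or.inl rfl⟩
      · have : (i + ((dval c l : ℕ) : ZMod (2*M+1)) - i) = ((dval c l : ℕ) : ZMod (2*M+1)) := by
          ring
        rw [this, cast_d_val h1 h2]
        exact h2
  rw [hset, Finset.card_image_of_injOn, Finset.card_product, card_range, Finset.card_univ,
    ZMod.card]
  intro q hq q' hq' he
  simp only [coe_product, Set.mem_prod, mem_coe, mem_range] at hq hq'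
  have he1 : q.2 = q'.2 := ((Prod.mk.injEq _ _ _ _).mp he).1
  have he2 := ((Prod.mk.injEq _ _ _ _).mp he).2
  rw [he1] at he2
  have : dval c q.1 = dval c q'.1 := add_inj (dval_le c q.1) (dval_le c q'.1) he2
  have : q.1 = q'.1 := dval_inj hhM c hq.1 hq'.1 this
  exact Prod.ext this he1

end Assemble

section Assemble2

variable {M h : ℕ} [NeZero M]
variable (A : ZMod (2*M+1) → Col M h → ZMod (2*M+1) → ℕ)

lemma exists_color (hhM : h ≤ M)
    (I0 : ∀ j c j', inCl c j j' → A j c j' < 2*h)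
    (I3 : ∀ j j' : ZMod (2*M+1), j ≠ j' → ∀ c c', inCl c j j' → inCl c' j j' →
      A j c j' = A j c' j' → A j' c j = A j' c' j → c = c')
    {i j : ZMod (2*M+1)} (hij : j ≠ i) {a b : ℕ} (ha : a < 2*h) (hb : b < 2*h) :
    ∃ c : Col M h, inCl c i j ∧ A i c j = a ∧ A j c i = b := by
  classical
  have hT : (univ.filter (fun c : Col M h => inCl c i j)).card = 4*h*h :=
    colorsPair_card hhM hij
  have hsurj := Finset.surj_on_of_inj_on_of_card_le
    (s := univ.filter (fun c : Col M h => inCl c i j))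
    (t := (range (2*h)) ×ˢ (range (2*h)))
    (f := fun c _ => (A i c j, A j c i))
    (by
      intro c hc
      simp only [mem_filter, mem_univ, true_and] at hc
      simp only [mem_product, mem_range]
      exact ⟨I0 i c j hc, I0 j c i (inCl_symm hc)⟩)
    (by
      intro c c' hc hc' he
      simp only [mem_filter, mem_univ, true_and] at hc hc'
      have he1 := ((Prod.mk.injEq _ _ _ _).mp he).1
      have he2 := ((Prod.mk.injEq _ _ _ _).mp he).2
      exact I3 i j (fun hcon => hij hcon.symm) c c' hc hc' he1 he2)
    (by
      rw [hT, Finset.card_product, card_range]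
      ring_nf
      omega)
  obtain ⟨c, hc, hcv⟩ := hsurj (a, b) (by simp only [mem_product, mem_range]; exact ⟨ha, hb⟩)
  simp only [mem_filter, mem_univ, true_and] at hc
  have h1 := ((Prod.mk.injEq _ _ _ _).mp hcv).1
  have h2 := ((Prod.mk.injEq _ _ _ _).mp hcv).2
  exact ⟨c, hc, h1.symm, h2.symm⟩

lemma word_inj_aux (hh1 : 1 ≤ h)
    (I0 : ∀ j c j', inCl c j j' → A j c j' < 2*h)
    {c c' : Col M h} {p q : ZMod (2*M+1) × ZMod (2*M+1)}
    (hp : p ∈ pairsOf (M := M) (h := h) c) (hq : q ∈ pairsOf (M := M) (h := h) c')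
    (hw : word A c p = word A c' q) :
    p = q ∧ A p.1 c p.2 = A p.1 c' p.2 ∧ A p.2 c p.1 = A p.2 c' p.1 := by
  simp only [pairsOf, mem_filter, mem_univ, true_and] at hp hq
  obtain ⟨hpc, hpv⟩ := hp
  obtain ⟨hqc, hqv⟩ := hq
  have hnp : p.2 ≠ p.1 := inCl_ne hpc
  have hnq : q.2 ≠ q.1 := inCl_ne hqc
  have hkey : p = q := by
    -- p.1 is a coordinate of q
    have h1 : p.1 = q.1 ∨ p.1 = q.2 := by
      have hx : ((word A c p (kap M p.1) : ℕ)) ≠ 0 := by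
        rw [word_at_fst]
        exact embed_pos_val hh1 _
      rw [hw] at hx
      have := (word_ne_zero_iff A hh1).mp hx
      rwa [iota_kap] at this
    have h2 : p.2 = q.1 ∨ p.2 = q.2 := by
      have hx : ((word A c p (kap M p.2) : ℕ)) ≠ 0 := by
        rw [word_at_snd A hnp]
        exact embed_pos_val hh1 _
      rw [hw] at hx
      have := (word_ne_zero_iff A hh1).mp hx
      rwa [iota_kap] at this
    have h3 : q.1 = p.1 ∨ q.1 = p.2 := by
      have hx : ((word A c' q (kap M q.1) : ℕ)) ≠ 0 := by
        rw [word_at_fst]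
        exact embed_pos_val hh1 _
      rw [← hw] at hx
      have := (word_ne_zero_iff A hh1).mp hx
      rwa [iota_kap] at this
    rcases h1 with h1 | h1
    · rcases h2 with h2 | h2
      · exact absurd (h1 ▸ h2) hnp
      · exact Prod.ext h1 h2
    · rcases h3 with h3 | h3
      · exact absurd (h1.symm.trans h3.symm) hnq
      · -- cross case: contradiction with orientation
        exfalso
        rw [← h1, h3] at hqv
        have hs := val_add_val hnp
        omega
  subst hkey
  refine ⟨rfl, ?_, ?_⟩
  · have := congrArg (fun w => ((w (kap M p.1) : ℕ))) hw
    simp only [word_at_fst] at this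
    rw [embed_val (by have := I0 p.1 c p.2 hpc; omega),
      embed_val (by have := I0 p.1 c' p.2 hqc; omega)] at this
    omega
  · have := congrArg (fun w => ((w (kap M p.2) : ℕ))) hw
    simp only [word_at_snd A hnp] at this
    rw [embed_val (by have := I0 p.2 c p.1 (inCl_symm hpc); omega),
      embed_val (by have := I0 p.2 c' p.1 (inCl_symm hqc); omega)] at this
    omega

lemma three_le_dist {w1 w2 : Fin (2*M+1) → Fin (2*h+1)} {z1 z2 z3 : Fin (2*M+1)}
    (h12 : z1 ≠ z2) (h13 : z1 ≠ z3) (h23 : z2 ≠ z3)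
    (d1 : w1 z1 ≠ w2 z1) (d2 : w1 z2 ≠ w2 z2) (d3 : w1 z3 ≠ w2 z3) :
    3 ≤ hammingDist w1 w2 := by
  classical
  have hsub : ({z1, z2, z3} : Finset (Fin (2*M+1))) ⊆
      univ.filter (fun z => w1 z ≠ w2 z) := by
    intro z hz
    simp only [mem_insert, mem_singleton] at hz
    rcases hz with rfl | rfl | rfl <;> simp only [mem_filter, mem_univ, true_and]
    · exact d1
    · exact d2
    · exact d3
  have hcard : ({z1, z2, z3} : Finset (Fin (2*M+1))).card = 3 := by
    rw [Finset.card_insert_of_notMem (by simp [h12, h13]),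
      Finset.card_insert_of_notMem (by simp [h23]), Finset.card_singleton]
  have hd : hammingDist w1 w2 = (univ.filter (fun z => w1 z ≠ w2 z)).card := by
    unfold hammingDist
    congr 1
  calc (3 : ℕ) = ({z1, z2, z3} : Finset (Fin (2*M+1))).card := hcard.symm
    _ ≤ (univ.filter (fun z => w1 z ≠ w2 z)).card := Finset.card_le_card hsub
    _ = hammingDist w1 w2 := hd.symm

end Assemble2

section Assemble3

variable {M h : ℕ} [NeZero M]
variable (A : ZMod (2*M+1) → Col M h → ZMod (2*M+1) → ℕ)

lemma class_dist (hh1 : 1 ≤ h)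
    (I0 : ∀ j c j', inCl c j j' → A j c j' < 2*h)
    (I1 : ∀ j c j' j'', inCl c j j' → inCl c j j'' → A j c j' = A j c j'' → j' = j'')
    {c : Col M h} {p q : ZMod (2*M+1) × ZMod (2*M+1)}
    (hp : p ∈ pairsOf (M := M) (h := h) c) (hq : q ∈ pairsOf (M := M) (h := h) c)
    (hpq : p ≠ q) :
    3 ≤ hammingDist (word A c p) (word A c q) := by
  simp only [pairsOf, mem_filter, mem_univ, true_and] at hp hq
  obtain ⟨hpc, hpv⟩ := hp
  obtain ⟨hqc, hqv⟩ := hq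
  have hnp : p.2 ≠ p.1 := inCl_ne hpc
  have hnq : q.2 ≠ q.1 := inCl_ne hqc
  have hne0 : ∀ (u v : Fin (2*h+1)), (u : ℕ) ≠ 0 → (v : ℕ) = 0 → u ≠ v :=
    fun u v h1 h2 hc => h1 (by rw [hc]; exact h2)
  have hzq : ∀ z : ZMod (2*M+1), z ≠ q.1 → z ≠ q.2 → ((word A c q (kap M z) : ℕ)) = 0 := by
    intro z hz1 hz2
    rw [word_at_other A (by rw [iota_kap]; exact hz1) (by rw [iota_kap]; exact hz2)]
  have hzp : ∀ z : ZMod (2*M+1), z ≠ p.1 → z ≠ p.2 → ((word A c p (kap M z) : ℕ)) = 0 := by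
    intro z hz1 hz2
    rw [word_at_other A (by rw [iota_kap]; exact hz1) (by rw [iota_kap]; exact hz2)]
  have nzp1 : ((word A c p (kap M p.1) : ℕ)) ≠ 0 := by
    rw [word_at_fst]; exact embed_pos_val hh1 _
  have nzp2 : ((word A c p (kap M p.2) : ℕ)) ≠ 0 := by
    rw [word_at_snd A hnp]; exact embed_pos_val hh1 _
  have nzq1 : ((word A c q (kap M q.1) : ℕ)) ≠ 0 := by
    rw [word_at_fst]; exact embed_pos_val hh1 _
  have nzq2 : ((word A c q (kap M q.2) : ℕ)) ≠ 0 := by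
    rw [word_at_snd A hnq]; exact embed_pos_val hh1 _
  have hshared : ∀ u pu qu : ZMod (2*M+1), inCl c u pu → inCl c u qu → pu ≠ qu →
      (embed h (A u c pu + 1) : Fin (2*h+1)) ≠ embed h (A u c qu + 1) := by
    intro u pu qu h1 h2 h3 hc
    have hv := congrArg Fin.val hc
    rw [embed_val (by have := I0 u c pu h1; omega),
      embed_val (by have := I0 u c qu h2; omega)] at hv
    exact h3 (I1 u c pu qu h1 h2 (by omega))
  by_cases e11 : p.1 = q.1
  · have e22 : p.2 ≠ q.2 := fun hc => hpq (Prod.ext e11 hc)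
    refine three_le_dist (z1 := kap M p.2) (z2 := kap M q.2) (z3 := kap M p.1)
      (fun hc => e22 (kap_inj hc)) (fun hc => hnp (kap_inj hc))
      (fun hc => hnq ((kap_inj hc).trans e11)) ?_ ?_ ?_
    · exact hne0 _ _ nzp2 (hzq p.2 (fun hc => hnp (hc.trans e11.symm)) e22)
    · exact (hne0 _ _ nzq2 (hzp q.2 (fun hc => hnq (hc.trans e11)) (fun hc => e22 hc.symm))).symm
    · have hq' : inCl c p.1 q.2 := by rw [e11]; exact hqc
      have hw2 : word A c q (kap M p.1) = embed h (A q.1 c q.2 + 1) := by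
        rw [e11]; exact word_at_fst A
      rw [word_at_fst, hw2, ← e11]
      exact hshared p.1 p.2 q.2 hpc hq' e22
  · by_cases e12 : p.1 = q.2
    · by_cases e21 : p.2 = q.1
      · -- cross case: contradiction with orientation
        exfalso
        rw [← e12, ← e21] at hqv
        have hs := val_add_val hnp
        omega
      · refine three_le_dist (z1 := kap M p.2) (z2 := kap M q.1) (z3 := kap M p.1)
          (fun hc => e21 (kap_inj hc)) (fun hc => hnp (kap_inj hc))
          (fun hc => hnq (e12 ▸ (kap_inj hc)).symm) ?_ ?_ ?_
        · exact hne0 _ _ nzp2 (hzq p.2 e21 (fun hc => hnp (hc.trans e12.symm)))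
        · exact (hne0 _ _ nzq1 (hzp q.1 (fun hc => e11 hc.symm)
            (fun hc => e21 hc.symm))).symm
        · have hq' : inCl c p.1 q.1 := by rw [e12]; exact inCl_symm hqc
          have hw2 : word A c q (kap M p.1) = embed h (A q.2 c q.1 + 1) := by
            rw [e12]; exact word_at_snd A hnq
          rw [word_at_fst, hw2, ← e12]
          exact hshared p.1 p.2 q.1 hpc hq' (fun hc => e21 hc)
    · by_cases e21 : p.2 = q.1
      · refine three_le_dist (z1 := kap M p.1) (z2 := kap M q.2) (z3 := kap M p.2)
          (fun hc => e12 (kap_inj hc)) (fun hc => hnp ((kap_inj hc)).symm)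
          (fun hc => hnq ((kap_inj hc).trans e21)) ?_ ?_ ?_
        · exact hne0 _ _ nzp1 (hzq p.1 e11 e12)
        · exact (hne0 _ _ nzq2 (hzp q.2 (fun hc => e12 hc.symm)
            (fun hc => hnq (hc.trans e21)))).symm
        · have hq' : inCl c p.2 q.2 := by rw [e21]; exact hqc
          have hw2 : word A c q (kap M p.2) = embed h (A q.1 c q.2 + 1) := by
            rw [e21]; exact word_at_fst A
          rw [word_at_snd A hnp, hw2, ← e21]
          exact hshared p.2 p.1 q.2 (inCl_symm hpc) hq' (fun hc => e12 hc)
      · by_cases e22 : p.2 = q.2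
        · refine three_le_dist (z1 := kap M p.1) (z2 := kap M q.1) (z3 := kap M p.2)
            (fun hc => e11 (kap_inj hc)) (fun hc => hnp ((kap_inj hc)).symm)
            (fun hc => hnq (((kap_inj hc).trans e22).symm)) ?_ ?_ ?_
          · exact hne0 _ _ nzp1 (hzq p.1 e11 e12)
          · exact (hne0 _ _ nzq1 (hzp q.1 (fun hc => e11 hc.symm)
              (fun hc => e21 hc.symm))).symm
          · have hq' : inCl c p.2 q.1 := by rw [e22]; exact inCl_symm hqc
            have hw2 : word A c q (kap M p.2) = embed h (A q.2 c q.1 + 1) := by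
              rw [e22]; exact word_at_snd A hnq
            rw [word_at_snd A hnp, hw2, ← e22]
            exact hshared p.2 p.1 q.1 (inCl_symm hpc) hq' (fun hc => e11 hc)
        · -- no shared coordinates
          refine three_le_dist (z1 := kap M p.1) (z2 := kap M p.2) (z3 := kap M q.1)
            (fun hc => hnp ((kap_inj hc)).symm) (fun hc => e11 (kap_inj hc))
            (fun hc => e21 (kap_inj hc)) ?_ ?_ ?_
          · exact hne0 _ _ nzp1 (hzq p.1 e11 e12)
          · exact hne0 _ _ nzp2 (hzq p.2 e21 e22)
          · exact (hne0 _ _ nzq1 (hzp q.1 (fun hc => e11 hc.symm)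
              (fun hc => e21 hc.symm))).symm

end Assemble3

section Final

variable {M h : ℕ} [NeZero M]
variable (A : ZMod (2*M+1) → Col M h → ZMod (2*M+1) → ℕ)

lemma classOf_sub (hh1 : 1 ≤ h) (c : Col M h) :
    classOf A c ⊆ weightTwoWords (2*M+1) (2*h) := by
  intro w hw
  simp only [classOf, mem_image] at hw
  obtain ⟨p, hp, rfl⟩ := hw
  simp only [weightTwoWords, mem_filter, mem_univ, true_and]
  simp only [pairsOf, mem_filter, mem_univ, true_and] at hp
  exact word_weight A hh1 hp.1

lemma classOf_card (hh1 : 1 ≤ h) (hhM : h ≤ M)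
    (I0 : ∀ j c j', inCl c j j' → A j c j' < 2*h) (c : Col M h) :
    (classOf A c).card = h * (2*M+1) := by
  unfold classOf
  rw [Finset.card_image_of_injOn, pairsOf_card hh1 hhM]
  intro p hp q hq he
  exact (word_inj_aux A hh1 I0 (mem_coe.mp hp) (mem_coe.mp hq) he).1

lemma cover_core (hh1 : 1 ≤ h) (hhM : h ≤ M)
    (I0 : ∀ j c j', inCl c j j' → A j c j' < 2*h)
    (I3 : ∀ j j' : ZMod (2*M+1), j ≠ j' → ∀ c c', inCl c j j' → inCl c' j j' →
      A j c j' = A j c' j' → A j' c j = A j' c' j → c = c')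
    (w : Fin (2*M+1) → Fin (2*h+1)) (x y : Fin (2*M+1)) (hxy : x ≠ y)
    (hfil : univ.filter (fun z => ((w z : ℕ)) ≠ 0) = {x, y})
    (hor : ((iota M y) - (iota M x)).val ≤ M) :
    ∃ c : Col M h, w ∈ classOf A c := by
  have hij : iota M y ≠ iota M x := fun hc => hxy (iota_inj hc).symm
  have hwx : ((w x : ℕ)) ≠ 0 := by
    have hx : x ∈ univ.filter (fun z => ((w z : ℕ)) ≠ 0) := by
      rw [hfil]; exact mem_insert_self _ _
    exact (mem_filter.mp hx).2
  have hwy : ((w y : ℕ)) ≠ 0 := by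
    have hy : y ∈ univ.filter (fun z => ((w z : ℕ)) ≠ 0) := by
      rw [hfil]; exact mem_insert_of_mem (mem_singleton_self _)
    exact (mem_filter.mp hy).2
  have hax : (w x : ℕ) - 1 < 2*h := by have := (w x).isLt; omega
  have hay : (w y : ℕ) - 1 < 2*h := by have := (w y).isLt; omega
  obtain ⟨c, hc, hA1, hA2⟩ := exists_color A hhM I0 I3 hij hax hay
  refine ⟨c, ?_⟩
  simp only [classOf, mem_image]
  refine ⟨(iota M x, iota M y), by
    simp only [pairsOf, mem_filter, mem_univ, true_and]; exact ⟨hc, hor⟩, ?_⟩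
  funext z
  by_cases hz1 : iota M z = iota M x
  · have hzx : z = x := iota_inj hz1
    subst hzx
    unfold word
    rw [if_pos hz1]
    apply Fin.ext
    rw [hA1, embed_val (by omega)]
    omega
  · by_cases hz2 : iota M z = iota M y
    · have hzy : z = y := iota_inj hz2
      subst hzy
      unfold word
      rw [if_neg hz1, if_pos hz2]
      apply Fin.ext
      rw [hA2, embed_val (by omega)]
      omega
    · unfold word
      rw [if_neg hz1, if_neg hz2]
      apply Fin.ext
      symm
      show ((w z : ℕ)) = 0
      by_contra hcz
      have hz : z ∈ univ.filter (fun z => ((w z : ℕ)) ≠ 0) :=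
        mem_filter.mpr ⟨mem_univ _, hcz⟩
      rw [hfil] at hz
      simp only [mem_insert, mem_singleton] at hz
      rcases hz with rfl | rfl
      · exact hz1 rfl
      · exact hz2 rfl

lemma cover (hh1 : 1 ≤ h) (hhM : h ≤ M)
    (I0 : ∀ j c j', inCl c j j' → A j c j' < 2*h)
    (I3 : ∀ j j' : ZMod (2*M+1), j ≠ j' → ∀ c c', inCl c j j' → inCl c' j j' →
      A j c j' = A j c' j' → A j' c j = A j' c' j → c = c') :
    ∀ w ∈ weightTwoWords (2*M+1) (2*h), ∃ c : Col M h, w ∈ classOf A c := by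
  intro w hw
  simp only [weightTwoWords, mem_filter, mem_univ, true_and] at hw
  unfold wordWeight at hw
  obtain ⟨x, y, hxy, hfil⟩ := Finset.card_eq_two.mp hw
  have hij : iota M y ≠ iota M x := fun hc => hxy (iota_inj hc).symm
  have hsum := val_add_val hij
  rcases le_or_gt ((iota M y - iota M x).val) M with hor | hor
  · exact cover_core A hh1 hhM I0 I3 w x y hxy hfil hor
  · exact cover_core A hh1 hhM I0 I3 w y x hxy.symm
      (hfil.trans (Finset.pair_comm x y)) (by omega)

end Final

theorem main_aux (M h : ℕ) [NeZero M] (hh1 : 1 ≤ h) (hhM : h ≤ M) : IsOF (2*M+1) (2*h) := by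
  classical
  obtain ⟨A, I0, I1, I3⟩ := exists_assignment (M := M) (h := h) hh1 hhM
  unfold IsOF HasDist3Partition
  have hcardC : Fintype.card (Col M h) = 2*h*(2*M+1-1) := by
    rw [Fintype.card_prod, Fintype.card_fin, ZMod.card, Nat.add_sub_cancel]
    ring
  set e := Fintype.equivFinOfCardEq hcardC with he
  refine ⟨fun idx => classOf A (e.symm idx), ?_, ?_, ?_, ?_⟩
  · intro i1 i2 hne
    rw [Finset.disjoint_left]
    intro w hw1 hw2
    simp only [classOf, mem_image] at hw1 hw2
    obtain ⟨p, hp, hw⟩ := hw1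
    obtain ⟨q, hq, hw'⟩ := hw2
    have hinj := word_inj_aux A hh1 I0 hp hq (hw.trans hw'.symm)
    obtain ⟨rfl, hv1, hv2⟩ := hinj
    simp only [pairsOf, mem_filter, mem_univ, true_and] at hp hq
    have hcc : e.symm i1 = e.symm i2 :=
      I3 p.1 p.2 (inCl_ne hp.1).symm _ _ hp.1 hq.1 hv1 hv2
    exact hne (e.symm.injective hcc)
  · apply Finset.Subset.antisymm
    · intro w hw
      simp only [mem_biUnion] at hw
      obtain ⟨idx, _, hw⟩ := hw
      exact classOf_sub A hh1 _ hw
    · intro w hw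
      obtain ⟨c, hc⟩ := cover A hh1 hhM I0 I3 w hw
      exact mem_biUnion.mpr ⟨e c, mem_univ _, by rw [Equiv.symm_apply_apply]; exact hc⟩
  · intro idx
    rw [classOf_card A hh1 hhM I0,
      show 2*h*(2*M+1) = 2*(h*(2*M+1)) by ring,
      Nat.mul_div_cancel_left _ (by norm_num : (0:ℕ) < 2)]
  · intro idx w1 hw1 w2 hw2 hne
    simp only [classOf, mem_image] at hw1 hw2
    obtain ⟨p, hp, rfl⟩ := hw1
    obtain ⟨q, hq, rfl⟩ := hw2
    have hpq : p ≠ q := fun hc => hne (by rw [hc])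
    exact class_dist A hh1 I0 I1 hp hq hpq

/-- For every even `g ≥ 2` and every odd `n ≥ max(2g-1, g+3)`, an `OF(n,g)`
exists. -/
theorem exists_OF_odd_n (n g : ℕ) (hg2 : 2 ≤ g) (hge : Even g) (hno : Odd n)
    (hn : max (2 * g - 1) (g + 3) ≤ n) : IsOF n g := by
  obtain ⟨m, hm⟩ := hno
  obtain ⟨k, hk⟩ := hge
  have hg3 : g + 3 ≤ n := le_trans (le_max_right _ _) hn
  haveI : NeZero m := ⟨by omega⟩
  have h1 : 1 ≤ k := by omega
  have h2 : k ≤ m := by omega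
  have hmain := main_aux m k h1 h2
  have hn' : n = 2*m+1 := by omega
  have hg' : g = 2*k := by omega
  rw [hn', hg']
  exact hmain
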